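/- If r_1 < 1 and r_{N−1} < 1 (invasion scenario B←←A, hence evolutionary scenario B⇐⇐A), then π_i < i/N for every i ∈ {1,…,N−1}, and the discrete derivative is strictly increasing: d_i < d_{i+1} for every 1 ≤ i ≤ N−1. -/

import Mathlib

lemma moran_aux_lin_pos {w t : ℝ} (hw0 : 0 ≤ w) (hw1 : w ≤ 1) (ht : 0 < t) :
    0 < 1 - w + w * t := by
  rcases lt_or_eq_of_le hw1 with h | h
  · nlinarith [mul_nonneg hw0 ht.le]
  · subst h; nlinarith

set_option maxHeartbeats 1000000 in
/-- in scenario B←←A (r_1 < 1 and r_{N-1} < 1), π_i < i/N for all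
1 ≤ i ≤ N−1, and the discrete derivative is strictly increasing. -/
theorem moran_graph_shape_B_dominates_A
    (N : ℕ) (hN : 3 ≤ N) (a b c d w : ℝ)
    (ha : 0 < a) (hb : 0 < b) (hc : 0 < c) (hd : 0 < d)
    (hw0 : 0 ≤ w) (hw1 : w ≤ 1)
    (r : ℕ → ℝ)
    (hr : ∀ i, 1 ≤ i → i ≤ N - 1 →
      r i = (1 - w + w * (a * ((i : ℝ) - 1) / ((N : ℝ) - 1) +
                b * ((N : ℝ) - (i : ℝ)) / ((N : ℝ) - 1))) /
            (1 - w + w * (c * (i : ℝ) / ((N : ℝ) - 1) +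
                d * ((N : ℝ) - (i : ℝ) - 1) / ((N : ℝ) - 1))))
    (hrpos : ∀ i, 1 ≤ i → i ≤ N - 1 → 0 < r i)
    (π : ℕ → ℝ) (hπ0 : π 0 = 0) (hπN : π N = 1)
    (hπ : ∀ i, 1 ≤ i → i ≤ N - 1 →
      π i = (1 + ∑ j ∈ Finset.Icc 1 (i - 1), ∏ k ∈ Finset.Icc 1 j, (r k)⁻¹) /
            (1 + ∑ j ∈ Finset.Icc 1 (N - 1), ∏ k ∈ Finset.Icc 1 j, (r k)⁻¹))
    (dd : ℕ → ℝ) (hdd : ∀ i, 1 ≤ i → i ≤ N → dd i = π i - π (i - 1))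
    (hr1 : r 1 < 1) (hrN1 : r (N - 1) < 1) :
    (∀ i, 1 ≤ i → i ≤ N - 1 → π i < (i : ℝ) / N) ∧
    (∀ i, 1 ≤ i → i ≤ N - 1 → dd i < dd (i + 1)) := by
  have hNR : (3:ℝ) ≤ (N:ℝ) := by exact_mod_cast hN
  have hN1 : (0:ℝ) < (N:ℝ) - 1 := by linarith
  have hN2 : (0:ℝ) < (N:ℝ) - 2 := by linarith
  set F : ℝ → ℝ := fun x => 1 - w + w * (a * (x - 1) / ((N:ℝ) - 1) + b * ((N:ℝ) - x) / ((N:ℝ) - 1)) with hFdef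
  set G : ℝ → ℝ := fun x => 1 - w + w * (c * x / ((N:ℝ) - 1) + d * ((N:ℝ) - x - 1) / ((N:ℝ) - 1)) with hGdef
  set Q : ℝ → ℝ := fun x => a * (x - 1) + b * ((N:ℝ) - x) - c * x - d * ((N:ℝ) - x - 1) with hQdef
  have hrFG : ∀ i : ℕ, 1 ≤ i → i ≤ N - 1 → r i = F (i:ℝ) / G (i:ℝ) := by
    intro i h1 h2
    rw [hr i h1 h2]
  have hGpos : ∀ x : ℝ, 1 ≤ x → x ≤ (N:ℝ) - 1 → 0 < G x := by
    intro x hx1 hx2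
    apply moran_aux_lin_pos hw0 hw1
    have h1 : 0 < c * x / ((N:ℝ)-1) := by
      apply div_pos (by nlinarith) hN1
    have h2 : 0 ≤ d * ((N:ℝ) - x - 1) / ((N:ℝ)-1) := by
      apply div_nonneg (by nlinarith) hN1.le
    linarith
  have hFG : ∀ x : ℝ, F x - G x = w * Q x / ((N:ℝ)-1) := by
    intro x
    simp only [hFdef, hGdef, hQdef]
    field_simp
    ring
  have hcastN1 : ((N - 1 : ℕ) : ℝ) = (N:ℝ) - 1 := by
    rw [Nat.cast_sub (by omega), Nat.cast_one]
  -- extract w > 0 and Q 1 < 0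
  have hwQ1 : w * Q 1 < 0 := by
    have hG1 : 0 < G 1 := hGpos 1 le_rfl (by linarith)
    have h := hrFG 1 (le_refl 1) (by omega)
    rw [Nat.cast_one] at h
    rw [h] at hr1
    have hF1 : F 1 - G 1 < 0 := by
      have := (div_lt_one hG1).mp hr1; linarith
    rw [hFG 1] at hF1
    have h2 : w * Q 1 = (w * Q 1 / ((N:ℝ)-1)) * ((N:ℝ)-1) := by field_simp
    rw [h2]
    exact mul_neg_of_neg_of_pos hF1 hN1
  have hw : 0 < w := by
    rcases eq_or_lt_of_le hw0 with h | h
    · exfalso; rw [← h] at hwQ1; simp at hwQ1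
    · exact h
  have hQ1 : Q 1 < 0 := by
    by_contra h
    push_neg at h
    nlinarith [mul_nonneg hw.le h]
  have hwQN1 : w * Q ((N:ℝ)-1) < 0 := by
    have hG1 : 0 < G ((N:ℝ)-1) := hGpos _ (by linarith) le_rfl
    have h := hrFG (N-1) (by omega) le_rfl
    rw [hcastN1] at h
    rw [h] at hrN1
    have hF1 : F ((N:ℝ)-1) - G ((N:ℝ)-1) < 0 := by
      have := (div_lt_one hG1).mp hrN1; linarith
    rw [hFG _] at hF1
    have h2 : w * Q ((N:ℝ)-1) = (w * Q ((N:ℝ)-1) / ((N:ℝ)-1)) * ((N:ℝ)-1) := by field_simp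
    rw [h2]
    exact mul_neg_of_neg_of_pos hF1 hN1
  have hQN1 : Q ((N:ℝ)-1) < 0 := by
    by_contra h
    push_neg at h
    nlinarith [mul_nonneg hw.le h]
  have hQ : ∀ x : ℝ, 1 ≤ x → x ≤ (N:ℝ)-1 → Q x < 0 := by
    intro x h1 h2
    have key : ((N:ℝ)-2) * Q x = ((N:ℝ)-1-x) * Q 1 + (x-1) * Q ((N:ℝ)-1) := by
      simp only [hQdef]; ring
    set M : ℝ := max (Q 1) (Q ((N:ℝ)-1)) with hMdef
    have hM : M < 0 := max_lt hQ1 hQN1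
    have t1 : ((N:ℝ)-1-x) * Q 1 ≤ ((N:ℝ)-1-x) * M :=
      mul_le_mul_of_nonneg_left (le_max_left _ _) (by linarith)
    have t2 : (x-1) * Q ((N:ℝ)-1) ≤ (x-1) * M :=
      mul_le_mul_of_nonneg_left (le_max_right _ _) (by linarith)
    have hle : ((N:ℝ)-2) * Q x ≤ ((N:ℝ)-2) * M := by nlinarith [key, t1, t2]
    have := (mul_le_mul_iff_right₀ hN2).mp hle
    linarith
  have hrlt1 : ∀ i : ℕ, 1 ≤ i → i ≤ N - 1 → r i < 1 := by
    intro i h1 h2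
    have hx1 : (1:ℝ) ≤ (i:ℝ) := by exact_mod_cast h1
    have hx2 : (i:ℝ) ≤ (N:ℝ) - 1 := by
      have : (i:ℝ) ≤ ((N-1:ℕ):ℝ) := Nat.cast_le.mpr h2
      rwa [hcastN1] at this
    have hGp := hGpos (i:ℝ) hx1 hx2
    have hQi := hQ (i:ℝ) hx1 hx2
    have hneg : F (i:ℝ) - G (i:ℝ) < 0 := by
      rw [hFG]
      exact div_neg_of_neg_of_pos (mul_neg_of_pos_of_neg hw hQi) hN1
    rw [hrFG i h1 h2]
    exact (div_lt_one hGp).mpr (by linarith)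
  -- the products P and partial sums S
  set P : ℕ → ℝ := fun j => ∏ k ∈ Finset.Icc 1 j, (r k)⁻¹ with hPdef
  have hP0 : P 0 = 1 := by simp [hPdef]
  have hPpos : ∀ j, j ≤ N - 1 → 0 < P j := by
    intro j hj
    apply Finset.prod_pos
    intro k hk
    simp only [Finset.mem_Icc] at hk
    exact inv_pos.mpr (hrpos k hk.1 (le_trans hk.2 hj))
  have hPsucc : ∀ j, P (j+1) = P j * (r (j+1))⁻¹ := by
    intro j
    simp only [hPdef]
    exact Finset.prod_Icc_succ_top (by omega) _
  have hPlt : ∀ j, j + 1 ≤ N - 1 → P j < P (j+1) := by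
    intro j hj
    have hrj := hrlt1 (j+1) (by omega) hj
    have hrpj := hrpos (j+1) (by omega) hj
    have hinv : 1 < (r (j+1))⁻¹ := (one_lt_inv₀ hrpj).mpr hrj
    have hp := hPpos j (by omega)
    rw [hPsucc j]
    calc P j = P j * 1 := by ring
    _ < P j * (r (j+1))⁻¹ := by exact mul_lt_mul_of_pos_left hinv hp
  have hPmono : ∀ k, k ≤ N - 1 → ∀ j, j ≤ k → P j ≤ P k := by
    intro k
    induction k with
    | zero =>
      intro _ j hj
      have : j = 0 := by omega
      subst this; exact le_rfl
    | succ k ih =>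
      intro hk j hj
      by_cases hjk : j = k + 1
      · subst hjk; exact le_rfl
      · have h1 : j ≤ k := by omega
        calc P j ≤ P k := ih (by omega) j h1
        _ ≤ P (k+1) := (hPlt k hk).le
  set S : ℕ → ℝ := fun i => ∑ j ∈ Finset.range i, P j with hSdef
  have hSsucc : ∀ i, S (i+1) = S i + P i := by
    intro i; simp [hSdef, Finset.sum_range_succ]
  have hSeq : ∀ i, 1 ≤ i → 1 + ∑ j ∈ Finset.Icc 1 (i-1), P j = S i := by
    intro i hi
    have h1 : Finset.Icc 1 (i-1) = Finset.Ico 1 i := by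
      rw [← Finset.Ico_add_one_right_eq_Icc]
      congr 1
      omega
    rw [h1]
    have h2 : S i = P 0 + ∑ j ∈ Finset.Ico 1 i, P j := by
      simp only [hSdef, Finset.range_eq_Ico]
      exact Finset.sum_eq_sum_Ico_succ_bot hi _
    rw [h2, hP0]
  have hSNpos : 0 < S N := by
    apply Finset.sum_pos
    · intro j hj
      simp only [Finset.mem_range] at hj
      exact hPpos j (by omega)
    · exact ⟨0, by simp [Finset.mem_range]; omega⟩
  have hπS : ∀ i, i ≤ N → π i = S i / S N := by
    intro i hi
    rcases Nat.eq_zero_or_pos i with h0 | h1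
    · subst h0
      simp [hπ0, hSdef]
    · rcases eq_or_lt_of_le hi with hiN | hiN
      · subst hiN
        rw [hπN, div_self hSNpos.ne']
      · rw [hπ i h1 (by omega), hSeq i h1, hSeq N (by omega)]
  refine ⟨?_, ?_⟩
  · -- π i < i / N
    intro i h1 h2
    have hiN : i < N := by omega
    have hiR : (1:ℝ) ≤ (i:ℝ) := by exact_mod_cast h1
    have hNiR : (0:ℝ) < (N:ℝ) - (i:ℝ) := by
      have : (i:ℝ) < (N:ℝ) := by exact_mod_cast hiN
      linarith
    have hc1 : S i ≤ (i:ℝ) * P (i-1) := by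
      have := Finset.sum_le_card_nsmul (Finset.range i) P (P (i-1))
        (fun j hj => hPmono (i-1) (by omega) j
          (by simp only [Finset.mem_range] at hj; omega))
      simpa [Finset.card_range, nsmul_eq_mul] using this
    have hc2 : ((N:ℝ) - (i:ℝ)) * P i ≤ ∑ j ∈ Finset.Ico i N, P j := by
      have := Finset.card_nsmul_le_sum (Finset.Ico i N) P (P i)
        (fun j hj => by
          simp only [Finset.mem_Ico] at hj
          exact hPmono j (by omega) i hj.1)
      rw [Nat.card_Ico, nsmul_eq_mul, Nat.cast_sub hiN.le] at this
      exact this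
    have hsplit : S N = S i + ∑ j ∈ Finset.Ico i N, P j := by
      simp only [hSdef, Finset.range_eq_Ico]
      rw [← Finset.sum_Ico_consecutive _ (Nat.zero_le i) hiN.le]
    have h3 : P (i-1) < P i := by
      have h := hPlt (i-1) (by omega)
      rwa [show i - 1 + 1 = i from by omega] at h
    rw [hπS i (by omega), div_lt_div_iff₀ hSNpos (by linarith : (0:ℝ) < (N:ℝ))]
    have A := mul_le_mul_of_nonneg_left hc1 hNiR.le
    have B := mul_le_mul_of_nonneg_left hc2 (by linarith : (0:ℝ) ≤ (i:ℝ))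
    have C := mul_lt_mul_of_pos_left h3 (mul_pos hNiR (by linarith : (0:ℝ) < (i:ℝ)))
    have D2 : (i:ℝ) * S N = (i:ℝ) * S i + (i:ℝ) * ∑ j ∈ Finset.Ico i N, P j := by
      rw [hsplit]; ring
    linarith [A, B, C, D2]
  · -- dd i < dd (i+1)
    intro i h1 h2
    have e1 : dd i = P (i-1) / S N := by
      rw [hdd i h1 (by omega), hπS i (by omega), hπS (i-1) (by omega), div_sub_div_same]
      congr 1
      have h := hSsucc (i-1)
      rw [show i - 1 + 1 = i from by omega] at h
      linarith
    have e2 : dd (i+1) = P i / S N := by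
      rw [hdd (i+1) (by omega) (by omega), Nat.add_sub_cancel,
        hπS (i+1) (by omega), hπS i (by omega), div_sub_div_same]
      congr 1
      have h := hSsucc i
      linarith
    have h3 : P (i-1) < P i := by
      have h := hPlt (i-1) (by omega)
      rwa [show i - 1 + 1 = i from by omega] at h
    rw [e1, e2, div_lt_div_iff₀ hSNpos hSNpos]
    exact mul_lt_mul_of_pos_right h3 hSNpos
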